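/- Multi-dimensional Cauchy-type reproducing formula: for pairwise distinct a_1,...,a_n inside the unit circle C and a symmetric entire (or analytic on a neighborhood of the closed unit polydisk) function Q, (1/(2πi))^n ∮_{C^n} V(z)^2 · ∏_{k,j} (z_k - a_j)^{-1} · Q(z) dz_1⋯dz_n = (-1)^{binom(n,2)} · n! · Q(a). -/

import Mathlib

open Complex Real Finset MeasureTheory

noncomputable section CauchyAuxSection

namespace CauchyReproAux

lemma exp_sub_ne {b : ℂ} (hb : ‖b‖ < 1) (θ : ℝ) :
    Complex.exp ((θ : ℂ) * Complex.I) - b ≠ 0 := by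
  intro h
  rw [sub_eq_zero] at h
  have := Complex.norm_exp_ofReal_mul_I θ
  rw [h] at this
  exact absurd this (by linarith)

lemma torusIntegrable_of_continuous {n : ℕ} {f : (Fin n → ℂ) → ℂ}
    (h : Continuous fun θ : Fin n → ℝ => f (torusMap 0 (fun _ => 1) θ)) :
    TorusIntegrable f 0 fun _ => 1 :=
  h.continuousOn.integrableOn_compact isCompact_Icc

lemma torusIntegral_congr_torus {n : ℕ} {f g : (Fin n → ℂ) → ℂ} {c : Fin n → ℂ} {R : Fin n → ℝ}
    (h : ∀ θ : Fin n → ℝ, f (torusMap c R θ) = g (torusMap c R θ)) :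
    torusIntegral f c R = torusIntegral g c R := by
  unfold torusIntegral
  exact setIntegral_congr_fun measurableSet_Icc fun θ _ => by rw [h θ]

lemma torusIntegral_sum {n : ℕ} {ι : Type*} (s : Finset ι) (f : ι → (Fin n → ℂ) → ℂ)
    {c : Fin n → ℂ} {R : Fin n → ℝ} (hf : ∀ i ∈ s, TorusIntegrable (f i) c R) :
    torusIntegral (fun z => ∑ i ∈ s, f i z) c R = ∑ i ∈ s, torusIntegral (f i) c R := by
  unfold torusIntegral
  calc ∫ θ in Set.Icc (0 : Fin n → ℝ) fun _ => 2 * π,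
        (∏ i, R i * Complex.exp (θ i * Complex.I) * Complex.I : ℂ) •
          ∑ i ∈ s, f i (torusMap c R θ)
      = ∫ θ in Set.Icc (0 : Fin n → ℝ) fun _ => 2 * π,
          ∑ i ∈ s, (∏ i, R i * Complex.exp (θ i * Complex.I) * Complex.I : ℂ) •
            f i (torusMap c R θ) := by
        refine setIntegral_congr_fun measurableSet_Icc fun θ _ => ?_
        rw [Finset.smul_sum]
    _ = _ := integral_finset_sum s fun i hi => (hf i hi).function_integrable

/-- Continuity of the standard Cauchy-kernel integrand pulled back to the torus. -/
lemma cont_integrand {n : ℕ} (b : Fin n → ℂ) (hb : ∀ k, ‖b k‖ < 1)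
    {F : (Fin n → ℂ) → ℂ} (hF : Continuous F) :
    Continuous fun θ : Fin n → ℝ =>
      (fun z : Fin n → ℂ => (∏ k, (z k - b k)⁻¹) * F z) (torusMap 0 (fun _ => 1) θ) := by
  have hmap : Continuous (torusMap (0 : Fin n → ℂ) fun _ => (1:ℝ)) := by
    refine continuous_pi fun i => ?_
    unfold torusMap
    fun_prop
  refine Continuous.mul ?_ (hF.comp hmap)
  refine continuous_finset_prod _ fun k _ => Continuous.inv₀ ?_ ?_
  · fun_prop
  · intro θ
    have : torusMap (0 : Fin n → ℂ) (fun _ => (1:ℝ)) θ k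
        = Complex.exp ((θ k : ℂ) * Complex.I) := by simp [torusMap]
    rw [this]
    exact exp_sub_ne (hb k) (θ k)

/-- Multidimensional Cauchy integral formula on the unit torus, for a kernel with one
simple pole per variable. -/
lemma torus_cauchy (n : ℕ) (b : Fin n → ℂ) (hb : ∀ k, ‖b k‖ < 1)
    (F : (Fin n → ℂ) → ℂ) (hF : Differentiable ℂ F) :
    torusIntegral (fun z => (∏ k, (z k - b k)⁻¹) * F z) 0 (fun _ => 1)
      = (2 * (π:ℂ) * Complex.I) ^ n * F b := by
  induction n with
  | zero =>
      rw [torusIntegral_dim0]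
      simp [Subsingleton.elim (0 : Fin 0 → ℂ) b]
  | succ n ih =>
      have hti : TorusIntegrable
          (fun z : Fin (n+1) → ℂ => (∏ k, (z k - b k)⁻¹) * F z) 0 fun _ => 1 :=
        torusIntegrable_of_continuous (cont_integrand b hb hF.continuous)
      rw [torusIntegral_succ hti]
      have hinner : ∀ x : ℂ,
          (torusIntegral
            (fun y => (∏ k, ((Fin.cons x y : Fin (n+1) → ℂ) k - b k)⁻¹) * F (Fin.cons x y))
            ((0 : Fin (n+1) → ℂ) ∘ Fin.succ) ((fun _ => (1:ℝ)) ∘ Fin.succ))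
          = (x - b 0)⁻¹ *
              ((2 * (π:ℂ) * Complex.I) ^ n * F (Fin.cons x fun k => b k.succ)) := by
        intro x
        have hFx : Differentiable ℂ fun y : Fin n → ℂ => F (Fin.cons x y) := by
          refine hF.comp ?_
          rw [differentiable_pi]
          intro i
          refine Fin.cases ?_ ?_ i
          · simpa using differentiable_const x
          · intro j
            simpa using differentiable_apply j
        have h0 : ((0 : Fin (n+1) → ℂ) ∘ Fin.succ) = (0 : Fin n → ℂ) := rfl
        have h1 : ((fun _ => (1:ℝ)) ∘ Fin.succ) = fun _ : Fin n => (1:ℝ) := rfl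
        rw [h0, h1]
        have heq : (fun y : Fin n → ℂ =>
              (∏ k, ((Fin.cons x y : Fin (n+1) → ℂ) k - b k)⁻¹) * F (Fin.cons x y))
            = fun y => (x - b 0)⁻¹ *
                ((∏ k : Fin n, (y k - b k.succ)⁻¹) * F (Fin.cons x y)) := by
          funext y
          rw [Fin.prod_univ_succ]
          simp [mul_assoc]
        rw [heq, torusIntegral_const_mul,
          ih (fun k => b k.succ) (fun k => hb k.succ) _ hFx]
      calc (∮ x in C((0 : Fin (n+1) → ℂ) 0, (fun _ => (1:ℝ)) 0),
              torusIntegral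
                (fun y => (∏ k, ((Fin.cons x y : Fin (n+1) → ℂ) k - b k)⁻¹) * F (Fin.cons x y))
                ((0 : Fin (n+1) → ℂ) ∘ Fin.succ) ((fun _ => (1:ℝ)) ∘ Fin.succ))
          = ∮ x in C((0:ℂ), (1:ℝ)), (x - b 0)⁻¹ •
              ((2 * (π:ℂ) * Complex.I) ^ n * F (Fin.cons x fun k => b k.succ)) := by
            rw [funext hinner]; rfl
        _ = (2 * (π:ℂ) * Complex.I) •
              ((2 * (π:ℂ) * Complex.I) ^ n * F (Fin.cons (b 0) fun k => b k.succ)) := by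
            refine DiffContOnCl.circleIntegral_sub_inv_smul ?_ ?_
            · refine Differentiable.diffContOnCl ?_
              refine (differentiable_const _).mul ?_
              refine hF.comp ?_
              rw [differentiable_pi]
              intro i
              refine Fin.cases ?_ ?_ i
              · simpa using differentiable_id
              · intro j; simpa using differentiable_const (b j.succ)
            · simpa [Metric.mem_ball, Complex.dist_eq] using hb 0
        _ = (2 * (π:ℂ) * Complex.I) ^ (n+1) * F b := by
            have : (Fin.cons (b 0) fun k => b k.succ) = b := Fin.cons_self_tail b
            rw [this, smul_eq_mul, pow_succ]
            ring

lemma partial_fraction {n : ℕ} [Nonempty (Fin n)] (a : Fin n → ℂ)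
    (ha : Function.Injective a) {z : ℂ} (hz : ∀ j, z ≠ a j) :
    ∏ j, (z - a j)⁻¹ = ∑ j, (∏ i ∈ univ.erase j, (a j - a i)⁻¹) * (z - a j)⁻¹ := by
  have hzsub : ∀ j, z - a j ≠ 0 := fun j => sub_ne_zero.mpr (hz j)
  have hbasis := Lagrange.sum_basis (v := a) (s := univ) ha.injOn univ_nonempty
  have heval := congrArg (Polynomial.eval z) hbasis
  rw [Polynomial.eval_finset_sum, Polynomial.eval_one] at heval
  have heval' : ∑ j, ∏ i ∈ univ.erase j, ((a j - a i)⁻¹ * (z - a i)) = 1 := by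
    rw [← heval]
    refine Finset.sum_congr rfl fun j _ => ?_
    rw [Lagrange.basis, Polynomial.eval_prod]
    refine Finset.prod_congr rfl fun i _ => ?_
    simp [Lagrange.basisDivisor]
  have key : ∀ j : Fin n, (z - a j)⁻¹ = (∏ i ∈ univ.erase j, (z - a i)) * ∏ i, (z - a i)⁻¹ := by
    intro j
    rw [Finset.prod_inv_distrib, ← Finset.mul_prod_erase (univ) (fun i => z - a i) (mem_univ j),
      mul_inv, ← mul_assoc, mul_comm (∏ i ∈ univ.erase j, (z - a i)),
      mul_assoc, mul_inv_cancel₀ (Finset.prod_ne_zero_iff.mpr fun i _ => hzsub i), mul_one]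
  calc ∏ j, (z - a j)⁻¹ = 1 * ∏ j, (z - a j)⁻¹ := (one_mul _).symm
    _ = (∑ j, ∏ i ∈ univ.erase j, ((a j - a i)⁻¹ * (z - a i))) * ∏ j, (z - a j)⁻¹ := by
        rw [heval']
    _ = ∑ j, (∏ i ∈ univ.erase j, (a j - a i)⁻¹) * (z - a j)⁻¹ := by
        rw [Finset.sum_mul]
        refine Finset.sum_congr rfl fun j _ => ?_
        rw [key j, Finset.prod_mul_distrib]
        ring

lemma differentiable_finset_prod {E : Type*} [NormedAddCommGroup E] [NormedSpace ℂ E]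
    {ι : Type*} (s : Finset ι) (f : ι → E → ℂ)
    (h : ∀ i ∈ s, Differentiable ℂ (f i)) :
    Differentiable ℂ fun z => ∏ i ∈ s, f i z := by
  classical
  induction s using Finset.induction_on with
  | empty => simpa using differentiable_const (1 : ℂ)
  | @insert x s hx ih =>
      simp only [Finset.prod_insert hx]
      exact (h x (Finset.mem_insert_self x s)).mul
        (ih fun i hi => h i (Finset.mem_insert_of_mem hi))

/-- The Vandermonde product as written in the theorem. -/
def V {n : ℕ} (v : Fin n → ℂ) : ℂ :=
  ∏ j : Fin n, ∏ k ∈ univ.filter (fun k => j < k), (v k - v j)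

lemma filter_eq_Ioi {n : ℕ} (j : Fin n) :
    univ.filter (fun k => j < k) = Finset.Ioi j := by
  ext k; simp

lemma V_eq_det {n : ℕ} (v : Fin n → ℂ) : V v = (Matrix.vandermonde v).det := by
  rw [Matrix.det_vandermonde, V]
  exact Finset.prod_congr rfl fun j _ => by rw [filter_eq_Ioi]

lemma V_comp_perm {n : ℕ} (v : Fin n → ℂ) (σ : Equiv.Perm (Fin n)) :
    V (v ∘ σ) = ((Equiv.Perm.sign σ : ℤ) : ℂ) * V v := by
  rw [V_eq_det, V_eq_det]
  have h : Matrix.vandermonde (v ∘ σ) = (Matrix.vandermonde v).submatrix σ id := by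
    ext i j; simp [Matrix.vandermonde]
  rw [h, Matrix.det_permute]

lemma V_sq_comp_perm {n : ℕ} (v : Fin n → ℂ) (σ : Equiv.Perm (Fin n)) :
    (V (v ∘ σ)) ^ 2 = (V v) ^ 2 := by
  rw [V_comp_perm, mul_pow]
  rcases Int.units_eq_one_or (Equiv.Perm.sign σ) with h | h <;> rw [h] <;> norm_num

lemma V_eq_zero {n : ℕ} {w : Fin n → ℂ} {j k : Fin n} (hjk : j ≠ k) (h : w j = w k) :
    V w = 0 := by
  rcases hjk.lt_or_gt with hlt | hlt
  · refine Finset.prod_eq_zero (mem_univ j) ?_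
    refine Finset.prod_eq_zero (Finset.mem_filter.mpr ⟨mem_univ k, hlt⟩) ?_
    rw [h, sub_self]
  · refine Finset.prod_eq_zero (mem_univ k) ?_
    refine Finset.prod_eq_zero (Finset.mem_filter.mpr ⟨mem_univ j, hlt⟩) ?_
    rw [h, sub_self]

lemma sum_card_Ioi (n : ℕ) : ∑ j : Fin n, (Finset.Ioi j).card = n.choose 2 := by
  have hswap : ∑ j : Fin n, (Finset.Ioi j).card = ∑ i : Fin n, (Finset.Iio i).card := by
    simp only [Finset.card_eq_sum_ones]
    refine Finset.sum_comm' ?_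
    intro x y
    simp [Finset.mem_Ioi, Finset.mem_Iio, and_comm]
  rw [hswap]
  simp only [Fin.card_Iio]
  rw [Fin.sum_univ_eq_sum_range (fun i => i) n, Finset.sum_range_id]
  exact (Nat.choose_two_right n).symm

lemma prod_erase_eq {n : ℕ} (a : Fin n → ℂ) :
    (∏ j, ∏ i ∈ univ.erase j, (a j - a i)) = (-1 : ℂ) ^ (n.choose 2) * (V a) ^ 2 := by
  have herase : ∀ j : Fin n, univ.erase j = Finset.Ioi j ∪ Finset.Iio j := by
    intro j; ext i
    simp only [Finset.mem_erase, Finset.mem_union, Finset.mem_univ, and_true,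
      Finset.mem_Ioi, Finset.mem_Iio, Fin.lt_def, ne_eq, Fin.ext_iff]
    omega
  have hdisj : ∀ j : Fin n, Disjoint (Finset.Ioi j) (Finset.Iio j) := by
    intro j
    refine Finset.disjoint_left.mpr fun i hi hi' => ?_
    simp only [Finset.mem_Ioi] at hi
    simp only [Finset.mem_Iio] at hi'
    exact absurd (hi.trans hi') (lt_irrefl j)
  calc (∏ j, ∏ i ∈ univ.erase j, (a j - a i))
      = ∏ j, ((∏ i ∈ Finset.Ioi j, (a j - a i)) * ∏ i ∈ Finset.Iio j, (a j - a i)) := by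
        refine Finset.prod_congr rfl fun j _ => ?_
        rw [herase j, Finset.prod_union (hdisj j)]
    _ = (∏ j, ∏ i ∈ Finset.Ioi j, (a j - a i)) * ∏ j, ∏ i ∈ Finset.Iio j, (a j - a i) := by
        rw [Finset.prod_mul_distrib]
    _ = ((-1 : ℂ) ^ (n.choose 2) * V a) * V a := by
        congr 1
        · calc ∏ j, ∏ i ∈ Finset.Ioi j, (a j - a i)
              = ∏ j, ∏ i ∈ Finset.Ioi j, ((-1) * (a i - a j)) := by
                refine Finset.prod_congr rfl fun j _ => Finset.prod_congr rfl fun i _ => by ring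
            _ = (∏ j : Fin n, ∏ _i ∈ Finset.Ioi j, (-1 : ℂ)) *
                  ∏ j, ∏ i ∈ Finset.Ioi j, (a i - a j) := by
                simp only [Finset.prod_mul_distrib]
            _ = (-1 : ℂ) ^ (n.choose 2) * V a := by
                congr 1
                · simp only [Finset.prod_const]
                  rw [Finset.prod_pow_eq_pow_sum, sum_card_Ioi]
                · rw [V]
                  exact Finset.prod_congr rfl fun j _ => by rw [filter_eq_Ioi]
        · rw [V]
          calc ∏ j, ∏ i ∈ Finset.Iio j, (a j - a i)
              = ∏ i, ∏ j ∈ Finset.Ioi i, (a j - a i) := by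
                refine Finset.prod_comm' ?_
                intro x y
                simp [Finset.mem_Ioi, Finset.mem_Iio, and_comm]
            _ = ∏ j : Fin n, ∏ k ∈ univ.filter (fun k => j < k), (a k - a j) :=
                (Finset.prod_congr rfl fun j _ => by rw [filter_eq_Ioi]).symm
    _ = (-1 : ℂ) ^ (n.choose 2) * (V a) ^ 2 := by ring

lemma V_ne_zero {n : ℕ} {a : Fin n → ℂ} (ha : Function.Injective a) : V a ≠ 0 := by
  rw [V_eq_det]
  exact Matrix.det_vandermonde_ne_zero_iff.mpr ha

lemma prod_c_mul_Vsq {n : ℕ} {a : Fin n → ℂ} (ha : Function.Injective a) :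
    (∏ j, ∏ i ∈ univ.erase j, (a j - a i)⁻¹) * (V a) ^ 2 = (-1 : ℂ) ^ (n.choose 2) := by
  have h1 : (∏ j, ∏ i ∈ univ.erase j, (a j - a i)⁻¹)
      = ((∏ j, ∏ i ∈ univ.erase j, (a j - a i)))⁻¹ := by
    simp [Finset.prod_inv_distrib]
  have hV : (V a) ^ 2 ≠ 0 := pow_ne_zero _ (V_ne_zero ha)
  rw [h1, prod_erase_eq, mul_inv, ← inv_pow, inv_neg, inv_one, mul_assoc,
    inv_mul_cancel₀ hV, mul_one]

lemma final_sum {n : ℕ} (a : Fin n → ℂ) (ha : Function.Injective a)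
    (Q : (Fin n → ℂ) → ℂ)
    (hQsym : ∀ (σ : Equiv.Perm (Fin n)) (z : Fin n → ℂ), Q (z ∘ σ) = Q z) :
    ∑ g : Fin n → Fin n, (∏ k, ∏ i ∈ univ.erase (g k), (a (g k) - a i)⁻¹) *
        ((V (a ∘ g)) ^ 2 * Q (a ∘ g))
      = (-1 : ℂ) ^ (n.choose 2) * (n.factorial : ℂ) * Q a := by
  set h : (Fin n → Fin n) → ℂ := fun g =>
    (∏ k, ∏ i ∈ univ.erase (g k), (a (g k) - a i)⁻¹) * ((V (a ∘ g)) ^ 2 * Q (a ∘ g)) with hh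
  have hzero : ∀ g : Fin n → Fin n, ¬ Function.Injective g → h g = 0 := by
    intro g hg
    rw [Function.not_injective_iff] at hg
    obtain ⟨j, k, hjk, hne⟩ := hg
    have : V (a ∘ g) = 0 := V_eq_zero hne (by simp [Function.comp, hjk])
    simp [hh, this]
  have hfilter : ∑ g : Fin n → Fin n, h g
      = ∑ g ∈ univ.filter (fun g : Fin n → Fin n => Function.Injective g), h g := by
    symm
    refine Finset.sum_subset (Finset.filter_subset _ _) ?_
    intro g _ hg
    refine hzero g ?_
    intro hcon
    exact hg (Finset.mem_filter.mpr ⟨mem_univ g, hcon⟩)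
  have hperm : ∑ g ∈ univ.filter (fun g : Fin n → Fin n => Function.Injective g), h g
      = ∑ σ : Equiv.Perm (Fin n), h ⇑σ := by
    symm
    refine Finset.sum_bij (fun σ _ => ⇑σ) ?_ ?_ ?_ ?_
    · intro σ _
      exact Finset.mem_filter.mpr ⟨mem_univ _, σ.injective⟩
    · intro σ _ τ _ hστ
      exact Equiv.ext (fun x => congrFun hστ x)
    · intro g hg
      have hginj : Function.Injective g := (Finset.mem_filter.mp hg).2
      exact ⟨Equiv.ofBijective g (Finite.injective_iff_bijective.mp hginj), mem_univ _, rfl⟩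
    · intro σ _; rfl
  have hval : ∀ σ : Equiv.Perm (Fin n), h ⇑σ = (-1 : ℂ) ^ (n.choose 2) * Q a := by
    intro σ
    have h1 : (∏ k, ∏ i ∈ univ.erase (σ k), (a (σ k) - a i)⁻¹)
        = ∏ j, ∏ i ∈ univ.erase j, (a j - a i)⁻¹ :=
      Equiv.prod_comp σ (fun j => ∏ i ∈ univ.erase j, (a j - a i)⁻¹)
    rw [hh]
    simp only [h1, V_sq_comp_perm a σ, hQsym σ a]
    rw [← mul_assoc, prod_c_mul_Vsq ha]
  rw [hfilter, hperm]
  simp only [hval]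
  rw [Finset.sum_const, Finset.card_univ, Fintype.card_perm, Fintype.card_fin, nsmul_eq_mul]
  ring

end CauchyReproAux

end CauchyAuxSection

open CauchyReproAux

theorem cauchy_type_reproducing_formula (n : ℕ) (a : Fin n → ℂ)
    (ha_disk : ∀ j, ‖a j‖ < 1) (ha_inj : Function.Injective a)
    (Q : (Fin n → ℂ) → ℂ) (hQ : AnalyticOn ℂ Q Set.univ)
    (hQsym : ∀ (σ : Equiv.Perm (Fin n)) (z : Fin n → ℂ), Q (z ∘ σ) = Q z) :
    (1 / (2 * (π : ℂ) * Complex.I)) ^ n *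
      ∫ t in (Set.univ.pi fun _ : Fin n => Set.Ioc (0:ℝ) (2 * π)),
        ((∏ j : Fin n, ∏ k ∈ univ.filter (fun k => j < k),
            (Complex.exp ((t k : ℂ) * Complex.I) -
              Complex.exp ((t j : ℂ) * Complex.I))) ^ 2 *
          (∏ k : Fin n, ∏ j : Fin n,
            (Complex.exp ((t k : ℂ) * Complex.I) - a j)⁻¹) *
          Q (fun k => Complex.exp ((t k : ℂ) * Complex.I)) *
          ∏ k : Fin n, (Complex.I * Complex.exp ((t k : ℂ) * Complex.I))) =
    (-1) ^ n.choose 2 * (n.factorial : ℂ) * Q a := by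
  classical
  have hQd : Differentiable ℂ Q := differentiableOn_univ.mp hQ.differentiableOn
  set F : (Fin n → ℂ) → ℂ := fun z => (V z) ^ 2 * Q z with hFdef
  have hVd : Differentiable ℂ (V (n := n)) := by
    unfold V
    refine differentiable_finset_prod _ _ fun j _ => ?_
    exact differentiable_finset_prod _ _
      fun k _ => (differentiable_apply k).sub (differentiable_apply j)
  have hF : Differentiable ℂ F := ((hVd.pow 2).mul hQd)
  set f : (Fin n → ℂ) → ℂ := fun z => (∏ k, ∏ j, (z k - a j)⁻¹) * F z with hfdef
  set c : Fin n → ℂ := fun j => ∏ i ∈ univ.erase j, (a j - a i)⁻¹ with hcdef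
  have h2pi : (2 * (π:ℂ) * Complex.I) ≠ 0 := by
    simp [Real.pi_ne_zero, Complex.I_ne_zero, Complex.ofReal_ne_zero]
  -- Step 1: identify the integral with a torus integral of `f`.
  have hstep1 :
      (∫ t in (Set.univ.pi fun _ : Fin n => Set.Ioc (0:ℝ) (2 * π)),
        ((∏ j : Fin n, ∏ k ∈ univ.filter (fun k => j < k),
            (Complex.exp ((t k : ℂ) * Complex.I) -
              Complex.exp ((t j : ℂ) * Complex.I))) ^ 2 *
          (∏ k : Fin n, ∏ j : Fin n,
            (Complex.exp ((t k : ℂ) * Complex.I) - a j)⁻¹) *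
          Q (fun k => Complex.exp ((t k : ℂ) * Complex.I)) *
          ∏ k : Fin n, (Complex.I * Complex.exp ((t k : ℂ) * Complex.I))))
      = torusIntegral f 0 (fun _ => 1) := by
    rw [volume_pi]
    rw [setIntegral_congr_set Measure.univ_pi_Ioc_ae_eq_Icc]
    rw [torusIntegral, ← volume_pi]
    refine setIntegral_congr_fun measurableSet_Icc fun θ _ => ?_
    have ht : torusMap (0 : Fin n → ℂ) (fun _ => 1) θ
        = fun k => Complex.exp ((θ k : ℂ) * Complex.I) := by
      funext k; simp [torusMap]
    rw [ht]
    have hprod : (∏ i : Fin n, (((1:ℝ):ℂ) * Complex.exp ((θ i : ℂ) * Complex.I) * Complex.I))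
        = ∏ k : Fin n, (Complex.I * Complex.exp ((θ k : ℂ) * Complex.I)) := by
      refine Finset.prod_congr rfl fun i _ => by push_cast; ring
    simp only [smul_eq_mul, hfdef, hFdef, V, hprod]
    ring
  -- Step 2: decompose the kernel by partial fractions on the torus.
  have hzna : ∀ (θ : Fin n → ℝ) (k j : Fin n),
      Complex.exp ((θ k : ℂ) * Complex.I) ≠ a j := fun θ k j =>
    sub_ne_zero.mp (exp_sub_ne (ha_disk j) (θ k))
  have hstep2 : torusIntegral f 0 (fun _ => 1)
      = torusIntegral (fun z => ∑ g : Fin n → Fin n,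
          (∏ k, c (g k)) * ((∏ k, (z k - a (g k))⁻¹) * F z)) 0 (fun _ => 1) := by
    refine torusIntegral_congr_torus fun θ => ?_
    have ht : torusMap (0 : Fin n → ℂ) (fun _ => 1) θ
        = fun k => Complex.exp ((θ k : ℂ) * Complex.I) := by
      funext k; simp [torusMap]
    rw [ht]
    set z : Fin n → ℂ := fun k => Complex.exp ((θ k : ℂ) * Complex.I) with hz
    have h2 : ∀ k : Fin n, ∏ j, (z k - a j)⁻¹ = ∑ j, c j * (z k - a j)⁻¹ := by
      intro k
      have : Nonempty (Fin n) := ⟨k⟩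
      exact partial_fraction a ha_inj (fun j => hzna θ k j)
    calc f z = (∏ k, ∑ j, c j * (z k - a j)⁻¹) * F z := by
          simp only [hfdef]
          congr 1
          exact Finset.prod_congr rfl fun k _ => h2 k
      _ = (∑ g ∈ Fintype.piFinset (fun _ : Fin n => (univ : Finset (Fin n))),
            ∏ k, c (g k) * (z k - a (g k))⁻¹) * F z := by
          rw [Finset.prod_univ_sum]
      _ = ∑ g : Fin n → Fin n, (∏ k, c (g k)) * ((∏ k, (z k - a (g k))⁻¹) * F z) := by
          rw [Fintype.piFinset_univ, Finset.sum_mul]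
          refine Finset.sum_congr rfl fun g _ => ?_
          rw [Finset.prod_mul_distrib, mul_assoc]
  -- Step 3: integrate each term by the multidimensional Cauchy formula.
  have hti : ∀ g : Fin n → Fin n, TorusIntegrable
      (fun z => (∏ k, c (g k)) * ((∏ k, (z k - a (g k))⁻¹) * F z)) 0 (fun _ => 1) := by
    intro g
    refine torusIntegrable_of_continuous ?_
    exact continuous_const.mul (cont_integrand (fun k => a (g k))
      (fun k => ha_disk (g k)) hF.continuous)
  have hstep3 : torusIntegral (fun z => ∑ g : Fin n → Fin n,
          (∏ k, c (g k)) * ((∏ k, (z k - a (g k))⁻¹) * F z)) 0 (fun _ => 1)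
      = ∑ g : Fin n → Fin n,
          (∏ k, c (g k)) * ((2 * (π:ℂ) * Complex.I) ^ n * F (fun k => a (g k))) := by
    rw [torusIntegral_sum _ _ (fun g _ => hti g)]
    refine Finset.sum_congr rfl fun g _ => ?_
    rw [torusIntegral_const_mul,
      torus_cauchy n (fun k => a (g k)) (fun k => ha_disk (g k)) F hF]
  -- Put everything together.
  rw [hstep1, hstep2, hstep3, Finset.mul_sum]
  have hterm : ∀ g : Fin n → Fin n,
      (1 / (2 * (π:ℂ) * Complex.I)) ^ n *
        ((∏ k, c (g k)) * ((2 * (π:ℂ) * Complex.I) ^ n * F (fun k => a (g k))))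
      = (∏ k, ∏ i ∈ univ.erase (g k), (a (g k) - a i)⁻¹) *
          ((V (a ∘ g)) ^ 2 * Q (a ∘ g)) := by
    intro g
    have hpow : (1 / (2 * (π:ℂ) * Complex.I)) ^ n * (2 * (π:ℂ) * Complex.I) ^ n = 1 := by
      rw [div_pow, one_pow, one_div, inv_mul_cancel₀ (pow_ne_zero n h2pi)]
    have hFg : F (fun k => a (g k)) = (V (a ∘ g)) ^ 2 * Q (a ∘ g) := rfl
    calc (1 / (2 * (π:ℂ) * Complex.I)) ^ n *
          ((∏ k, c (g k)) * ((2 * (π:ℂ) * Complex.I) ^ n * F (fun k => a (g k))))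
        = ((1 / (2 * (π:ℂ) * Complex.I)) ^ n * (2 * (π:ℂ) * Complex.I) ^ n) *
            ((∏ k, c (g k)) * F (fun k => a (g k))) := by ring
      _ = (∏ k, c (g k)) * ((V (a ∘ g)) ^ 2 * Q (a ∘ g)) := by
          rw [hpow, one_mul, hFg]
      _ = _ := rfl
  simp only [hterm]
  exact final_sum a ha_inj Q hQsym
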